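/- Let $A = X_N^\top X_N$ be positive semidefinite, $\lambda > 0$, $P_\lambda = (A + \lambda I)^{-1}$, and define the ridge solution $\hat{\theta}_\lambda = P_\lambda X_N^\top Y_N$ and $K_\lambda = 1 + x^\top P_\lambda x$. Then the minimizer $\hat{\theta}_y$ of $\sum_{n=1}^N(y_n - \theta^\top x_n)^2 + (y - \theta^\top x)^2 + \lambda\|\theta\|^2$ equals $\hat{\theta}_\lambda + \frac{P_\lambda x}{K_\lambda}(y - \hat{\theta}_\lambda^\top x)$, and its residual on the test point satisfies $(y - \hat{\theta}_y^\top x)^2 = \frac{1}{K_\lambda^2}(y - \hat{\theta}_\lambda^\top x)^2$. -/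

import Mathlib

open Matrix

/-- Ridge regression recursive least squares with an appended test sample: the
minimizer of the regularized loss is `θ_λ + (P_λ x / K_λ)(y - θ_λᵀx)` and the
test residual shrinks by the factor `1/K_λ²`. -/
theorem ridge_genie_rls {N M : ℕ}
    (X : Matrix (Fin N) (Fin M) ℝ) (Y : Fin N → ℝ)
    (x : Fin M → ℝ) (y : ℝ) (lam : ℝ) (hlam : 0 < lam)
    (Plam : Matrix (Fin M) (Fin M) ℝ)
    (hPlam : Plam = (Xᵀ * X + lam • (1 : Matrix (Fin M) (Fin M) ℝ))⁻¹)
    (θlam : Fin M → ℝ) (hθlam : θlam = Plam.mulVec (Xᵀ.mulVec Y))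
    (Klam : ℝ) (hKlam : Klam = 1 + x ⬝ᵥ Plam.mulVec x)
    (θy : Fin M → ℝ)
    (hθy : θy = θlam + (Klam⁻¹ * (y - θlam ⬝ᵥ x)) • Plam.mulVec x) :
    (∀ θ : Fin M → ℝ,
      (Y - X.mulVec θy) ⬝ᵥ (Y - X.mulVec θy) + (y - θy ⬝ᵥ x) ^ 2 + lam * (θy ⬝ᵥ θy) ≤
        (Y - X.mulVec θ) ⬝ᵥ (Y - X.mulVec θ) + (y - θ ⬝ᵥ x) ^ 2 + lam * (θ ⬝ᵥ θ)) ∧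
      (y - θy ⬝ᵥ x) ^ 2 = (1 / Klam ^ 2) * (y - θlam ⬝ᵥ x) ^ 2 := by
  set B : Matrix (Fin M) (Fin M) ℝ := Xᵀ * X + lam • (1 : Matrix (Fin M) (Fin M) ℝ) with hB
  -- B is positive definite
  have hBpd : B.PosDef := by
    have h1 : (Xᵀ * X).PosSemidef := by
      have := posSemidef_conjTranspose_mul_self X
      simpa [conjTranspose_eq_transpose_of_trivial] using this
    have h2 : (lam • (1 : Matrix (Fin M) (Fin M) ℝ)).PosDef := by
      have h : (lam • (1 : Matrix (Fin M) (Fin M) ℝ)) = Matrix.diagonal (fun _ => lam) := by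
        ext i j; by_cases h : i = j <;> simp [Matrix.one_apply, Matrix.diagonal, h]
      rw [h]
      exact Matrix.PosDef.diagonal (fun _ => hlam)
    exact Matrix.PosDef.posSemidef_add h1 h2
  have hdet : IsUnit B.det := hBpd.det_pos.ne'.isUnit
  have hBP : B * Plam = 1 := by rw [hPlam]; exact Matrix.mul_nonsing_inv B hdet
  have hPpd : Plam.PosDef := hPlam ▸ hBpd.inv
  -- Klam ≥ 1
  have hxPx : 0 ≤ x ⬝ᵥ Plam.mulVec x := by
    have := hPpd.posSemidef.dotProduct_mulVec_nonneg x
    simpa using this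
  have hK1 : 1 ≤ Klam := by rw [hKlam]; linarith
  have hKne : Klam ≠ 0 := by linarith
  set r : ℝ := y - θlam ⬝ᵥ x with hr
  set c : ℝ := Klam⁻¹ * r with hc
  have hcK : c * Klam = r := by
    rw [hc, mul_comm, ← mul_assoc, mul_inv_cancel₀ hKne, one_mul]
  -- B θlam = Xᵀ Y, B (Plam x) = x
  have hBθ : B.mulVec θlam = Xᵀ.mulVec Y := by
    rw [hθlam, mulVec_mulVec, hBP, one_mulVec]
  have hBx : B.mulVec (Plam.mulVec x) = x := by
    rw [mulVec_mulVec, hBP, one_mulVec]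
  -- residual identity
  have hθyx : θy ⬝ᵥ x = θlam ⬝ᵥ x + c * (x ⬝ᵥ Plam.mulVec x) := by
    rw [hθy, add_dotProduct, smul_dotProduct, smul_eq_mul, dotProduct_comm (Plam.mulVec x) x]
  have hres : y - θy ⬝ᵥ x = c := by
    have hx2 : x ⬝ᵥ Plam.mulVec x = Klam - 1 := by rw [hKlam]; ring
    rw [hθyx, hx2]
    have : y - θlam ⬝ᵥ x = r := rfl
    nlinarith [hcK]
  constructor
  · -- minimality
    -- stationarity vector equation
    have hBθy : B.mulVec θy = Xᵀ.mulVec Y + c • x := by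
      rw [hθy, mulVec_add, mulVec_smul, hBθ, hBx]
    have hstat : Xᵀ.mulVec (Y - X.mulVec θy) + c • x = lam • θy := by
      have hBsplit : B.mulVec θy = Xᵀ.mulVec (X.mulVec θy) + lam • θy := by
        rw [hB, add_mulVec, mulVec_mulVec, smul_mulVec, one_mulVec]
      have hXXθy : Xᵀ.mulVec (X.mulVec θy) = Xᵀ.mulVec Y + c • x - lam • θy := by
        rw [← hBθy, hBsplit]; abel
      rw [mulVec_sub, hXXθy]; abel
    intro θ
    set d : Fin M → ℝ := θ - θy with hd
    have hθeq : θ = θy + d := by rw [hd]; abel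
    have key : (Y - X.mulVec θy) ⬝ᵥ X.mulVec d + c * (x ⬝ᵥ d) = lam * (θy ⬝ᵥ d) := by
      have := congrArg (fun v => v ⬝ᵥ d) hstat
      simpa [add_dotProduct, smul_dotProduct, smul_eq_mul, mulVec_transpose,
        ← dotProduct_mulVec] using this
    rw [hθeq]
    have h1 : 0 ≤ X.mulVec d ⬝ᵥ X.mulVec d := by
      have : X.mulVec d ⬝ᵥ X.mulVec d = ∑ i, (X.mulVec d i) ^ 2 := by
        simp [dotProduct, sq]
      rw [this]; positivity
    have h2 : 0 ≤ d ⬝ᵥ d := by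
      have : d ⬝ᵥ d = ∑ i, (d i) ^ 2 := by simp [dotProduct, sq]
      rw [this]; positivity
    have hxd : (x ⬝ᵥ d) = (d ⬝ᵥ x) := dotProduct_comm x d
    simp only [mulVec_add, sub_add_eq_sub_sub, dotProduct_sub, sub_dotProduct,
      dotProduct_add, add_dotProduct]
    rw [hres]
    have key2 : Y ⬝ᵥ X.mulVec d - X.mulVec θy ⬝ᵥ X.mulVec d + c * (x ⬝ᵥ d) = lam * (θy ⬝ᵥ d) := by
      rw [← key, sub_dotProduct]
    have hlam2 : lam * (θy ⬝ᵥ θy + d ⬝ᵥ θy + (θy ⬝ᵥ d + d ⬝ᵥ d)) =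
        lam * (θy ⬝ᵥ θy) + 2 * (lam * (θy ⬝ᵥ d)) + lam * (d ⬝ᵥ d) := by
      rw [dotProduct_comm d θy]; ring
    have h3 : 0 ≤ lam * (d ⬝ᵥ d) := mul_nonneg hlam.le h2
    have hC1 : X.mulVec d ⬝ᵥ Y = Y ⬝ᵥ X.mulVec d := dotProduct_comm _ _
    have hC2 : X.mulVec d ⬝ᵥ X.mulVec θy = X.mulVec θy ⬝ᵥ X.mulVec d := dotProduct_comm _ _
    have key3 : Y ⬝ᵥ X.mulVec d - X.mulVec θy ⬝ᵥ X.mulVec d + c * (d ⬝ᵥ x) = lam * (θy ⬝ᵥ d) := by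
      rw [← hxd]; exact key2
    have hsq : (c - d ⬝ᵥ x) ^ 2 = c ^ 2 - 2 * (c * (d ⬝ᵥ x)) + (d ⬝ᵥ x) ^ 2 := by ring
    linarith [key3, h1, h3, sq_nonneg (d ⬝ᵥ x), hC1, hC2, hlam2, hsq]
  · rw [hres, hc]
    field_simp
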